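/- Let fill : ℕ → ℕ satisfy the ortree invariant fill(m) = fill(m - 2^(s-1)) ∨ fill(m + 2^(s-1)) for every internal index m with 2-adic valuation s ≥ 1 (bitwise OR). Fix i < j and let p be the index with 2p the lowest common ancestor of leaves 2i+1 and 2j+1. Then the following iteration computes OR of fill over odd indices strictly between 2i and 2p: initialize f := 0, a := i - p; while a ≠ 0, let s := a AND (-a) (the lowest set bit of a, computed in two's complement, i.e., s = 2^(2-adic valuation of (p - i)) at the first step with a interpreted as p - i negated), update f := f OR fill(2p + 2a + s) and a := a + s. Upon termination, f = ⋁ { fill(t) : t odd, 2i < t < 2p }. -/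

import Mathlib

def lowBit (a : ℕ) : ℕ := a - (a &&& (a - 1))

def ortreeOr (fill : ℕ → ℕ) (lo hi : ℕ) : ℕ :=
  (((List.range hi).filter (fun t => decide (lo < t) && decide (t % 2 = 1))).map fill).foldr
    (· ||| ·) 0

def ortreeLoop1 (fill : ℕ → ℕ) (p : ℕ) : ℕ → ℕ → ℕ
  | 0, _ => 0
  | fuel + 1, a =>
    if a = 0 then 0
    else
      ortreeLoop1 fill p fuel (a - lowBit a) ||| fill (2 * p - 2 * a + lowBit a)

-- land lemmas
lemma land_self' (x : ℕ) : x &&& x = x := by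
  apply Nat.eq_of_testBit_eq; intro i; simp [Nat.testBit_land]

lemma land_odd_even (x y : ℕ) : (2*x+1) &&& (2*y) = 2*(x &&& y) := by
  apply Nat.eq_of_testBit_eq; intro i
  cases i with
  | zero =>
    simp only [Nat.testBit_zero, Nat.testBit_land, Nat.testBit_zero]
    have h1 : (2*x+1) % 2 = 1 := by omega
    have h2 : (2*y) % 2 = 0 := by omega
    have h3 : (2*(x &&& y)) % 2 = 0 := by omega
    simp [h1, h2, h3]
  | succ i =>
    have h1 : (2*x+1)/2 = x := by omega
    have h2 : (2*y)/2 = y := by omega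
    have h3 : (2*(x &&& y))/2 = x &&& y := by omega
    rw [Nat.testBit_land]
    simp only [Nat.testBit_succ, h1, h2, h3, Nat.testBit_land]

lemma land_even_odd (x y : ℕ) : (2*x) &&& (2*y+1) = 2*(x &&& y) := by
  apply Nat.eq_of_testBit_eq; intro i
  cases i with
  | zero =>
    simp only [Nat.testBit_zero, Nat.testBit_land]
    have h1 : (2*y+1) % 2 = 1 := by omega
    have h2 : (2*x) % 2 = 0 := by omega
    have h3 : (2*(x &&& y)) % 2 = 0 := by omega
    simp [h1, h2, h3]
  | succ i =>
    have h1 : (2*y+1)/2 = y := by omega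
    have h2 : (2*x)/2 = x := by omega
    have h3 : (2*(x &&& y))/2 = x &&& y := by omega
    rw [Nat.testBit_land]
    simp only [Nat.testBit_succ, h1, h2, h3, Nat.testBit_land]

lemma land_le_self_left (x y : ℕ) : x &&& y ≤ x := Nat.and_le_left

lemma lowBit_odd (b : ℕ) : lowBit (2*b+1) = 1 := by
  unfold lowBit
  have h : 2*b+1-1 = 2*b := by omega
  rw [h, land_odd_even, land_self']
  omega

lemma lowBit_even (b : ℕ) (hb : 0 < b) : lowBit (2*b) = 2 * lowBit b := by
  unfold lowBit
  have h : 2*b-1 = 2*(b-1)+1 := by omega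
  rw [h, land_even_odd]
  have := land_le_self_left b (b-1)
  omega

lemma lowBit_spec : ∀ a : ℕ, 0 < a → ∃ k, lowBit a = 2^k ∧ 2^k ∣ a := by
  intro a
  induction a using Nat.strong_induction_on with
  | _ a ih =>
    intro ha
    rcases Nat.even_or_odd a with ⟨b, hb⟩ | ⟨b, hb⟩
    · have hb' : a = 2*b := by omega
      have hbpos : 0 < b := by omega
      obtain ⟨k, hk1, hk2⟩ := ih b (by omega) hbpos
      refine ⟨k+1, ?_, ?_⟩
      · rw [hb', lowBit_even b hbpos, hk1, pow_succ]; ring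
      · rw [hb', pow_succ]
        obtain ⟨c, hc⟩ := hk2
        exact ⟨c, by rw [hc]; ring⟩
    · refine ⟨0, ?_, one_dvd a⟩
      rw [hb, lowBit_odd, pow_zero]

-- ortreeOr lemmas
lemma foldr_or (l : List ℕ) (b : ℕ) : l.foldr (· ||| ·) b = l.foldr (· ||| ·) 0 ||| b := by
  induction l with
  | nil => simp
  | cons x l ihl => simp [List.foldr_cons, ihl, Nat.or_assoc]

lemma ortreeOr_of_le (fill : ℕ → ℕ) {lo hi : ℕ} (h : hi ≤ lo) : ortreeOr fill lo hi = 0 := by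
  unfold ortreeOr
  rw [List.filter_eq_nil_iff.mpr]
  · rfl
  · intro t ht
    simp only [List.mem_range] at ht
    simp only [Bool.and_eq_true, decide_eq_true_eq]
    omega

lemma ortreeOr_succ (fill : ℕ → ℕ) (lo hi : ℕ) : ortreeOr fill lo (hi+1) =
    if lo < hi ∧ hi % 2 = 1 then ortreeOr fill lo hi ||| fill hi else ortreeOr fill lo hi := by
  unfold ortreeOr
  rw [List.range_succ, List.filter_append, List.filter_singleton]
  by_cases h : lo < hi ∧ hi % 2 = 1
  · have : (decide (lo < hi) && decide (hi % 2 = 1)) = true := by simp [h.1, h.2]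
    rw [if_pos h, this, cond_true]
    rw [List.map_append, List.foldr_append]
    simp only [List.map_cons, List.map_nil, List.foldr_cons, List.foldr_nil]
    rw [foldr_or, Nat.or_zero]
  · have : (decide (lo < hi) && decide (hi % 2 = 1)) = false := by
      rcases not_and_or.mp h with h' | h' <;> simp [h']
    rw [if_neg h, this, cond_false, List.append_nil]

lemma ortreeOr_split (fill : ℕ → ℕ) (lo mid hi : ℕ) (h1 : lo ≤ mid) (h2 : mid ≤ hi)
    (h3 : mid % 2 = 0) :
    ortreeOr fill lo hi = ortreeOr fill lo mid ||| ortreeOr fill mid hi := by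
  induction hi, h2 using Nat.le_induction with
  | base => rw [ortreeOr_of_le fill le_rfl, Nat.or_zero]
  | succ hi hmh ihh =>
    rw [ortreeOr_succ, ortreeOr_succ fill mid hi, ihh]
    by_cases hb : hi % 2 = 1
    · have hmid : mid < hi := by omega
      have hlo : lo < hi := by omega
      rw [if_pos ⟨hlo, hb⟩, if_pos ⟨hmid, hb⟩, Nat.or_assoc]
    · rw [if_neg (by tauto), if_neg (by tauto)]

section
variable (fill : ℕ → ℕ)
  (hinv : ∀ q s, 1 ≤ s →
      fill (q * 2 ^ (s + 1) + 2 ^ s) =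
        fill (q * 2 ^ (s + 1) + 2 ^ s - 2 ^ (s - 1)) |||
          fill (q * 2 ^ (s + 1) + 2 ^ s + 2 ^ (s - 1)))

include hinv in
lemma ortree_subtree : ∀ k q, fill (q * 2^(k+1) + 2^k) =
    ortreeOr fill (q * 2^(k+1)) (q * 2^(k+1) + 2^(k+1)) := by
  intro k
  induction k with
  | zero =>
    intro q
    have e1 : q * 2^(0+1) + 2^0 = 2*q + 1 := by ring
    have e2 : q * 2^(0+1) + 2^(0+1) = 2*q + 1 + 1 := by ring
    have e3 : q * 2^(0+1) = 2*q := by ring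
    have e0 : ortreeOr fill (2*q) (2*q+1) = 0 := by
      rw [ortreeOr_succ, if_neg (by omega), ortreeOr_of_le fill le_rfl]
    have e4 : ortreeOr fill (2*q) (2*q+1+1) = fill (2*q+1) := by
      rw [ortreeOr_succ, if_pos ⟨by omega, by omega⟩, e0, Nat.zero_or]
    rw [e1, e2, e3, e4]
  | succ k ihk =>
    intro q
    have h := hinv q (k+1) (by omega)
    simp only [Nat.add_sub_cancel] at h
    have e1 : q * 2^(k+1+1) + 2^(k+1) - 2^k = (2*q) * 2^(k+1) + 2^k :=
      Nat.sub_eq_of_eq_add (by rw [pow_succ, pow_succ]; ring)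
    have e2 : q * 2^(k+1+1) + 2^(k+1) + 2^k = (2*q+1) * 2^(k+1) + 2^k := by
      rw [pow_succ, pow_succ]; ring
    rw [e1, e2] at h
    rw [h, ihk (2*q), ihk (2*q+1)]
    have e3 : (2*q) * 2^(k+1) = q * 2^(k+1+1) := by rw [pow_succ _ (k+1)]; ring
    have e4 : (2*q) * 2^(k+1) + 2^(k+1) = (2*q+1) * 2^(k+1) := by ring
    have e5 : (2*q+1) * 2^(k+1) + 2^(k+1) = q * 2^(k+1+1) + 2^(k+1+1) := by
      rw [pow_succ _ (k+1)]; ring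
    rw [e4, e5, e3]
    refine (ortreeOr_split fill _ _ _ ?_ ?_ ?_).symm
    · rw [← e3, ← e4]; exact Nat.le_add_right _ _
    · rw [← e5]; exact Nat.le_add_right _ _
    · have h6 : (2*q+1) * 2^(k+1) = 2 * ((2*q+1) * 2^k) := by rw [pow_succ]; ring
      rw [h6]; exact Nat.mul_mod_right 2 _

include hinv in
lemma ortree_loop1_eq (p L : ℕ) (hdvd : 2^L ∣ p) :
    ∀ fuel a, a ≤ fuel → a ≤ 2^L → a ≤ p →
      ortreeLoop1 fill p fuel a = ortreeOr fill (2*p - 2*a) (2*p) := by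
  intro fuel
  induction fuel with
  | zero =>
    intro a ha _ _
    have : a = 0 := by omega
    subst this
    rw [show ortreeLoop1 fill p 0 0 = 0 from rfl,
      ortreeOr_of_le fill (by omega)]
  | succ fuel ihf =>
    intro a ha hL hap
    by_cases h0 : a = 0
    · subst h0
      rw [show ortreeLoop1 fill p (fuel+1) 0 = 0 from by simp [ortreeLoop1],
        ortreeOr_of_le fill (by omega)]
    · have hapos : 0 < a := Nat.pos_of_ne_zero h0
      obtain ⟨k, hk, hkdvd⟩ := lowBit_spec a hapos
      have hs_le : 2^k ≤ a := Nat.le_of_dvd hapos hkdvd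
      have hspos : 0 < 2^k := Nat.two_pow_pos k
      have hkL : k ≤ L := by
        by_contra hc
        have : 2^L < 2^k := Nat.pow_lt_pow_right (by norm_num) (by omega)
        omega
      have hpk : 2^k ∣ p := dvd_trans (Nat.pow_dvd_pow 2 hkL) hdvd
      have hdk : 2^k ∣ (p - a) := Nat.dvd_sub hpk hkdvd
      obtain ⟨q, hq⟩ := hdk
      have hlin : 2*p - 2*a = q * 2^(k+1) := by
        have h3 : 2*p - 2*a = 2*(p-a) := by omega
        rw [h3, hq, pow_succ]; ring
      rw [show ortreeLoop1 fill p (fuel+1) a =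
          ortreeLoop1 fill p fuel (a - lowBit a) ||| fill (2*p - 2*a + lowBit a) from
          by simp [ortreeLoop1, h0]]
      rw [hk]
      rw [ihf (a - 2^k) (by omega) (by omega) (by omega)]
      rw [show 2*p - 2*a + 2^k = q * 2^(k+1) + 2^k from by rw [hlin]]
      rw [ortree_subtree fill hinv k q]
      have e2 : q * 2^(k+1) + 2^(k+1) = 2*p - 2*(a - 2^k) := by
        have h4 : 2*p - 2*(a - 2^k) = (2*p - 2*a) + 2*2^k := by omega
        rw [h4, hlin, pow_succ]
        ring
      rw [e2, ← hlin, Nat.lor_comm]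
      refine (ortreeOr_split fill _ _ _ (by omega) (by omega) (by omega)).symm
end

theorem ortree_or_first_loop
    (fill : ℕ → ℕ)
    (hinv : ∀ q s, 1 ≤ s →
      fill (q * 2 ^ (s + 1) + 2 ^ s) =
        fill (q * 2 ^ (s + 1) + 2 ^ s - 2 ^ (s - 1)) |||
          fill (q * 2 ^ (s + 1) + 2 ^ s + 2 ^ (s - 1)))
    (i j : ℕ) (hij : i < j)
    (p : ℕ) (hp : p = j - j % 2 ^ (Nat.log2 (i ^^^ j))) :
    ortreeLoop1 fill p (p - i) (p - i) = ortreeOr fill (2 * i) (2 * p) := by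
  have hxne : i ^^^ j ≠ 0 := fun h => absurd (xor_eq_zero_iff.mp h) (by omega)
  obtain ⟨L, hL⟩ : ∃ L, L = Nat.log2 (i ^^^ j) := ⟨_, rfl⟩
  obtain ⟨D, hD⟩ : ∃ D, D = 2 ^ L := ⟨_, rfl⟩
  rw [← hL, ← hD] at hp
  have hDpos : 0 < D := by rw [hD]; positivity
  have h1 : D ≤ i ^^^ j := by rw [hD, hL]; exact Nat.log2_self_le hxne
  have h2 : i ^^^ j < 2 * D := by
    have h := @Nat.lt_log2_self (i ^^^ j)
    rw [← hL, pow_succ, ← hD] at h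
    omega
  have h2D : (2 * D : ℕ) = 2 ^ (L + 1) := by rw [hD, pow_succ]; ring
  have hdiv : i / (2 * D) = j / (2 * D) := by
    have hsh : i >>> (L + 1) = j >>> (L + 1) := by
      apply Nat.eq_of_testBit_eq
      intro t
      rw [Nat.testBit_shiftRight, Nat.testBit_shiftRight]
      have hlt : i ^^^ j < 2 ^ (L + 1 + t) := by
        calc i ^^^ j < 2 * D := h2
          _ = 2 ^ (L + 1) := h2D
          _ ≤ 2 ^ (L + 1 + t) := Nat.pow_le_pow_right (by norm_num) (by omega)
      have hx : (i ^^^ j).testBit (L + 1 + t) = false := Nat.testBit_lt_two_pow hlt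
      rw [Nat.testBit_xor] at hx
      revert hx
      cases i.testBit (L + 1 + t) <;> cases j.testBit (L + 1 + t) <;> simp
    rw [h2D]
    rw [Nat.shiftRight_eq_div_pow, Nat.shiftRight_eq_div_pow] at hsh
    exact hsh
  have hxdiv : (i ^^^ j) / D = 1 :=
    Nat.div_eq_of_lt_le (by omega) (by omega)
  have hxbit : (i ^^^ j).testBit L = true := by
    rw [Nat.testBit_eq_decide_div_mod_eq, ← hD, hxdiv]
    norm_num
  have hbitne : i.testBit L ≠ j.testBit L := by
    rw [Nat.testBit_xor] at hxbit
    revert hxbit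
    cases i.testBit L <;> cases j.testBit L <;> simp
  have hmoddiv : ∀ n : ℕ, n % (2 * D) / D = n / D % 2 := by
    intro n
    have h := Nat.mod_mul_right_div_self n D 2
    rwa [Nat.mul_comm D 2] at h
  have hmodlt : ∀ n : ℕ, n % (2 * D) < 2 * D := fun n => Nat.mod_lt _ (by omega)
  have hbit_iff : ∀ n : ℕ, n.testBit L = true ↔ D ≤ n % (2 * D) := by
    intro n
    rw [Nat.testBit_eq_decide_div_mod_eq, ← hD, decide_eq_true_eq, ← hmoddiv n]
    have hm := hmodlt n
    constructor
    · intro hh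
      have := Nat.div_mul_le_self (n % (2 * D)) D
      rw [hh, Nat.one_mul] at this
      exact this
    · intro hh
      exact Nat.div_eq_of_lt_le (by omega) (by omega)
  have hiq := Nat.div_add_mod i (2 * D)
  have hjq := Nat.div_add_mod j (2 * D)
  rw [hdiv] at hiq
  have hdvdA : D ∣ 2 * D * (j / (2 * D)) := ⟨2 * (j / (2 * D)), by ring⟩
  have hbits : i % (2 * D) < D ∧ D ≤ j % (2 * D) := by
    generalize 2 * D * (j / (2 * D)) = A at hiq hjq
    have hi' := hbit_iff i
    have hj' := hbit_iff j
    cases hiL : i.testBit L with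
    | false =>
      cases hjL : j.testBit L with
      | false => exact absurd (hiL.trans hjL.symm) hbitne
      | true =>
        constructor
        · have : ¬ (D ≤ i % (2 * D)) := fun hc => by simp [hi'.mpr hc] at hiL
          omega
        · exact hj'.mp hjL
    | true =>
      cases hjL : j.testBit L with
      | true => exact absurd (hiL.trans hjL.symm) hbitne
      | false =>
        exfalso
        have hile : D ≤ i % (2 * D) := hi'.mp hiL
        have hjlt : ¬ (D ≤ j % (2 * D)) := fun hc => by simp [hj'.mpr hc] at hjL
        omega
  have hjD : j % D = j % (2 * D) - D := by
    have hdd : D ∣ 2 * D := ⟨2, Nat.mul_comm 2 D⟩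
    have h' : j % (2 * D) % D = j % D := Nat.mod_mod_of_dvd j hdd
    have hge := hbits.2
    have hlt := hmodlt j
    have heq : j % (2 * D) % D = (j % (2 * D) - D) % D := Nat.mod_eq_sub_mod hge
    rw [heq] at h'
    rw [← h', Nat.mod_eq_of_lt (by omega)]
  generalize hA : 2 * D * (j / (2 * D)) = A at hiq hjq hdvdA
  have hpA : p = A + D := by
    rw [hp, hjD]
    have h3 := hbits.2
    have h4 := hmodlt j
    omega
  have hdvdp : D ∣ p := by
    rw [hpA]
    exact dvd_add hdvdA dvd_rfl
  have hbi := hbits.1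
  have hip : i ≤ p := by omega
  have hpi : p - i ≤ D := by omega
  rw [hD] at hdvdp hpi
  rw [ortree_loop1_eq fill hinv p L hdvdp (p - i) (p - i) le_rfl hpi (by omega)]
  congr 1
  omega
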